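/- arXiv:2010.04847 — 2 statements merged into one kernel-verified Lean document; each statement's English description precedes it below -/
import Mathlib

section
/- Let n ≥ 1, let Ψ : ℝⁿ → ℝ be twice continuously differentiable, and let p : (0,∞) × ℝⁿ → ℝ be differentiable in the time variable t for each x and twice continuously differentiable in the space variable x for each t, satisfying the Fokker–Planck equation ∂p(t,x) = (1/2) Δp(t,x) + div(y ↦ p(t,y) ∇Ψ(y))(x) for all (t,x) ∈ (0,∞) × ℝⁿ (Laplacian, gradient and divergence taken in the spatial variable). Then the likelihood ratio ℓ(t,x) := p(t,x) · exp(2 Ψ(x)) satisfies the backward Kolmogorov equation ∂ℓ(t,x) = (1/2) Δℓ(t,x) − ⟨∇ℓ(t,x), ∇Ψ(x)⟩ for all (t,x) ∈ (0,∞) × ℝⁿ. -/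
open Real InnerProductSpace

noncomputable section

/-- Laplacian of a scalar function on `ℝⁿ`: sum of second partial derivatives. -/
def lap {n : ℕ} (f : EuclideanSpace ℝ (Fin n) → ℝ) (x : EuclideanSpace ℝ (Fin n)) : ℝ :=
  ∑ i : Fin n,
    fderiv ℝ (fun y => fderiv ℝ f y (EuclideanSpace.single i (1 : ℝ))) x
      (EuclideanSpace.single i (1 : ℝ))

/-- Divergence of a vector field on `ℝⁿ`: sum of partial derivatives of the components. -/
def div' {n : ℕ} (v : EuclideanSpace ℝ (Fin n) → EuclideanSpace ℝ (Fin n))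
    (x : EuclideanSpace ℝ (Fin n)) : ℝ :=
  ∑ i : Fin n, fderiv ℝ (fun y => v y i) x (EuclideanSpace.single i (1 : ℝ))

variable {n : ℕ}

def pd (i : Fin n) (f : EuclideanSpace ℝ (Fin n) → ℝ) (x : EuclideanSpace ℝ (Fin n)) : ℝ :=
  fderiv ℝ f x (EuclideanSpace.single i 1)

lemma inner_gradient (f : EuclideanSpace ℝ (Fin n) → ℝ) (x v : EuclideanSpace ℝ (Fin n)) :
    ⟪gradient f x, v⟫_ℝ = fderiv ℝ f x v := by
  rw [gradient, InnerProductSpace.toDual_symm_apply]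

lemma gradient_apply' (f : EuclideanSpace ℝ (Fin n) → ℝ) (x : EuclideanSpace ℝ (Fin n)) (i : Fin n) :
    gradient f x i = pd i f x := by
  have := inner_gradient f x (EuclideanSpace.single i 1)
  rwa [EuclideanSpace.inner_single_right, RCLike.conj_to_real, one_mul] at this

lemma pd_differentiable {f : EuclideanSpace ℝ (Fin n) → ℝ} (hf : ContDiff ℝ 2 f) (i : Fin n) :
    Differentiable ℝ (pd i f) := by
  have h1 : ContDiff ℝ 1 (fun y => fderiv ℝ f y) := hf.fderiv_right (by norm_num)
  exact (((ContinuousLinearMap.apply ℝ ℝ (EuclideanSpace.single i 1)).contDiff).comp h1).differentiable one_ne_zero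

lemma pd_mul {f g : EuclideanSpace ℝ (Fin n) → ℝ} {x : EuclideanSpace ℝ (Fin n)}
    (hf : DifferentiableAt ℝ f x) (hg : DifferentiableAt ℝ g x) (i : Fin n) :
    pd i (fun y => f y * g y) x = pd i f x * g x + f x * pd i g x := by
  simp [pd, fderiv_fun_mul hf hg]; ring

lemma pd_exp {Ψ : EuclideanSpace ℝ (Fin n) → ℝ} (hΨ : ContDiff ℝ 2 Ψ)
    (i : Fin n) (y : EuclideanSpace ℝ (Fin n)) :
    pd i (fun z => Real.exp (2 * Ψ z)) y = 2 * pd i Ψ y * Real.exp (2 * Ψ y) := by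
  have hd : DifferentiableAt ℝ (fun z => 2 * Ψ z) y :=
    (hΨ.differentiable two_ne_zero y).const_mul 2
  simp only [pd]
  rw [fderiv_exp hd, fderiv_const_mul (hΨ.differentiable two_ne_zero y)]
  simp; ring

lemma pd_add {f g : EuclideanSpace ℝ (Fin n) → ℝ} {x : EuclideanSpace ℝ (Fin n)}
    (hf : DifferentiableAt ℝ f x) (hg : DifferentiableAt ℝ g x) (i : Fin n) :
    pd i (fun y => f y + g y) x = pd i f x + pd i g x := by
  simp [pd, fderiv_fun_add hf hg]

lemma lap_eq (f : EuclideanSpace ℝ (Fin n) → ℝ) (x : EuclideanSpace ℝ (Fin n)) :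
    lap f x = ∑ i, pd i (pd i f) x := rfl

lemma lap_mul {f g : EuclideanSpace ℝ (Fin n) → ℝ} (hf : ContDiff ℝ 2 f) (hg : ContDiff ℝ 2 g)
    (x : EuclideanSpace ℝ (Fin n)) :
    lap (fun y => f y * g y) x
      = lap f x * g x + 2 * ∑ i, pd i f x * pd i g x + f x * lap g x := by
  have hf1 := hf.differentiable two_ne_zero
  have hg1 := hg.differentiable two_ne_zero
  have key : ∀ i : Fin n, pd i (pd i (fun y => f y * g y)) x
      = pd i (pd i f) x * g x + 2 * (pd i f x * pd i g x) + f x * pd i (pd i g) x := by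
    intro i
    have hfun : pd i (fun y => f y * g y) = fun y => pd i f y * g y + f y * pd i g y :=
      funext fun y => pd_mul (hf1 y) (hg1 y) i
    rw [hfun, pd_add ((pd_differentiable hf i x).fun_mul (hg1 x))
        ((hf1 x).fun_mul (pd_differentiable hg i x)),
      pd_mul (pd_differentiable hf i x) (hg1 x),
      pd_mul (hf1 x) (pd_differentiable hg i x)]
    ring
  rw [lap_eq, Finset.sum_congr rfl fun i _ => key i]
  simp [lap_eq, Finset.sum_add_distrib, Finset.sum_mul, Finset.mul_sum]

lemma pd_const_mul {f : EuclideanSpace ℝ (Fin n) → ℝ} {x : EuclideanSpace ℝ (Fin n)}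
    (hf : DifferentiableAt ℝ f x) (c : ℝ) (i : Fin n) :
    pd i (fun y => c * f y) x = c * pd i f x := by
  simp [pd, fderiv_const_mul hf c]

/-- If `p` satisfies the Fokker–Planck equation associated with the potential `Ψ`, then the
likelihood ratio `ℓ(t,x) = p(t,x) · exp(2Ψ(x))` satisfies the backward Kolmogorov equation
`∂ℓ = (1/2) Δℓ − ⟨∇ℓ, ∇Ψ⟩`. -/
theorem likelihood_ratio_satisfies_backward_kolmogorov
    (n : ℕ) (hn : 1 ≤ n)
    (Ψ : EuclideanSpace ℝ (Fin n) → ℝ) (hΨ : ContDiff ℝ 2 Ψ)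
    (p : ℝ → EuclideanSpace ℝ (Fin n) → ℝ)
    (hp_time : ∀ x : EuclideanSpace ℝ (Fin n), ∀ t : ℝ, 0 < t →
      DifferentiableAt ℝ (fun s => p s x) t)
    (hp_space : ∀ t : ℝ, 0 < t → ContDiff ℝ 2 (p t))
    (hFP : ∀ t : ℝ, 0 < t → ∀ x : EuclideanSpace ℝ (Fin n),
      deriv (fun s => p s x) t =
        (1 / 2) * lap (p t) x + div' (fun y => p t y • gradient Ψ y) x) :
    ∀ t : ℝ, 0 < t → ∀ x : EuclideanSpace ℝ (Fin n),
      deriv (fun s => p s x * Real.exp (2 * Ψ x)) t =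
        (1 / 2) * lap (fun y => p t y * Real.exp (2 * Ψ y)) x
          - ⟪gradient (fun y => p t y * Real.exp (2 * Ψ y)) x, gradient Ψ x⟫_ℝ := by
  intro t ht x
  have hq : ContDiff ℝ 2 (p t) := hp_space t ht
  have hq1 : Differentiable ℝ (p t) := hq.differentiable two_ne_zero
  have hΨ1 : Differentiable ℝ Ψ := hΨ.differentiable two_ne_zero
  have hE : ContDiff ℝ 2 (fun y => Real.exp (2 * Ψ y)) :=
    Real.contDiff_exp.comp (contDiff_const.mul hΨ)
  have hE1 : Differentiable ℝ (fun y => Real.exp (2 * Ψ y)) := hE.differentiable two_ne_zero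
  set E := Real.exp (2 * Ψ x) with hEdef
  -- time derivative
  rw [deriv_mul_const (hp_time x t ht), hFP t ht x]
  -- divergence term
  have hdiv : div' (fun y => p t y • gradient Ψ y) x
      = ∑ i, (pd i (p t) x * pd i Ψ x + p t x * pd i (pd i Ψ) x) := by
    unfold div'
    refine Finset.sum_congr rfl fun i _ => ?_
    have hfun : (fun y => (p t y • gradient Ψ y) i) = fun y => p t y * pd i Ψ y := by
      funext y
      simp [gradient_apply']
    rw [show fderiv ℝ (fun y => (p t y • gradient Ψ y) i) x (EuclideanSpace.single i 1)
        = pd i (fun y => (p t y • gradient Ψ y) i) x from rfl, hfun,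
      pd_mul (hq1 x) (pd_differentiable hΨ i x) i]
  rw [hdiv]
  -- inner product term
  have hinner : ⟪gradient (fun y => p t y * Real.exp (2 * Ψ y)) x, gradient Ψ x⟫_ℝ
      = ∑ i, (pd i (p t) x * E + p t x * (2 * pd i Ψ x * E)) * pd i Ψ x := by
    rw [PiLp.inner_apply]
    refine Finset.sum_congr rfl fun i _ => ?_
    rw [gradient_apply', gradient_apply', pd_mul (hq1 x) (hE1 x) i, pd_exp hΨ i x,
      RCLike.inner_apply, RCLike.conj_to_real, hEdef, mul_comm (pd i Ψ x)]
  rw [hinner]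
  -- Laplacian term
  have hlapE : lap (fun y => Real.exp (2 * Ψ y)) x
      = ∑ i, (2 * pd i (pd i Ψ) x * E + 2 * pd i Ψ x * (2 * pd i Ψ x * E)) := by
    rw [lap_eq]
    refine Finset.sum_congr rfl fun i _ => ?_
    have h1 : pd i (fun y => Real.exp (2 * Ψ y)) = fun y => (2 * pd i Ψ y) * Real.exp (2 * Ψ y) :=
      funext fun y => pd_exp hΨ i y
    rw [h1, pd_mul ((pd_differentiable hΨ i x).const_mul 2) (hE1 x) i,
      pd_const_mul (pd_differentiable hΨ i x) 2 i, pd_exp hΨ i x]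
  have hlap : lap (fun y => p t y * Real.exp (2 * Ψ y)) x
      = lap (p t) x * E + 2 * ∑ i, pd i (p t) x * (2 * pd i Ψ x * E)
        + p t x * ∑ i, (2 * pd i (pd i Ψ) x * E + 2 * pd i Ψ x * (2 * pd i Ψ x * E)) := by
    rw [lap_mul hq hE x, hlapE]
    congr 2
    refine congrArg _ (Finset.sum_congr rfl fun i _ => ?_)
    rw [pd_exp hΨ i x]
  rw [hlap]
  -- pure algebra on finite sums
  have e1 : ∑ i, pd i (p t) x * (2 * pd i Ψ x * E)
      = 2 * E * ∑ i, pd i (p t) x * pd i Ψ x := by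
    rw [Finset.mul_sum]; exact Finset.sum_congr rfl fun i _ => by ring
  have e2 : ∑ i, (2 * pd i (pd i Ψ) x * E + 2 * pd i Ψ x * (2 * pd i Ψ x * E))
      = 2 * E * ∑ i, pd i (pd i Ψ) x + 4 * E * ∑ i, pd i Ψ x * pd i Ψ x := by
    rw [Finset.sum_add_distrib, Finset.mul_sum, Finset.mul_sum]
    congr 1
    · exact Finset.sum_congr rfl fun i _ => by ring
    · exact Finset.sum_congr rfl fun i _ => by ring
  have e3 : ∑ i, (pd i (p t) x * E + p t x * (2 * pd i Ψ x * E)) * pd i Ψ x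
      = E * ∑ i, pd i (p t) x * pd i Ψ x + 2 * p t x * E * ∑ i, pd i Ψ x * pd i Ψ x := by
    rw [Finset.mul_sum, Finset.mul_sum, ← Finset.sum_add_distrib]
    exact Finset.sum_congr rfl fun i _ => by ring
  have e4 : ∑ i, (pd i (p t) x * pd i Ψ x + p t x * pd i (pd i Ψ) x)
      = ∑ i, pd i (p t) x * pd i Ψ x + p t x * ∑ i, pd i (pd i Ψ) x := by
    rw [Finset.sum_add_distrib, Finset.mul_sum]
  rw [e1, e2, e3, e4]
  ring

end
end

section
/- Let (Ω, 𝓕, μ) be a probability space and let (𝓗_t)_{t ≥ 0} be an antitone family of sub-σ-algebras of 𝓕 (i.e. 𝓗_s ⊇ 𝓗_t whenever s ≤ t) whose intersection 𝓗_∞ := ⋂_{t ≥ 0} 𝓗_t is μ-trivial, meaning μ(A) ∈ {0,1} for every A ∈ 𝓗_∞. Let θ : Ω → [0,∞) be measurable with θ and θ·log θ both μ-integrable, and set θ_t := E[θ | 𝓗_t]. With f(x) = x log x for x > 0 and f(0) = 0, the function t ↦ ∫ f(θ_t) dμ is nonincreasing on [0,∞) and converges, as t → ∞, to f(∫ θ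 dμ). In particular, if ∫ θ dμ = 1, then ∫ θ_t log θ_t dμ decreases to 0 as t → ∞. -/
open MeasureTheory Filter

noncomputable section

section BWEAux

open Topology
open scoped ENNReal

namespace BWE

variable {Ω : Type*} [F : MeasurableSpace Ω] {μ : Measure Ω} [IsProbabilityMeasure μ]

set_option linter.unusedSectionVars false

lemma tangent_le {x q : ℝ} (hx : 0 ≤ x) (hq : 0 < q) :
    (Real.log q + 1) * x - q ≤ x * Real.log x := by
  rcases eq_or_lt_of_le hx with h | h
  · simp [← h]; linarith
  · have hlog : Real.log (q / x) ≤ q / x - 1 := Real.log_le_sub_one_of_pos (by positivity)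
    rw [Real.log_div hq.ne' h.ne'] at hlog
    have h2 := mul_le_mul_of_nonneg_left hlog h.le
    have h3 : x * (q / x) = q := by field_simp
    nlinarith

lemma neg_exp_le {x : ℝ} (hx : 0 ≤ x) : -Real.exp (-1) ≤ x * Real.log x := by
  have h := tangent_le hx (Real.exp_pos (-1))
  rw [Real.log_exp] at h; linarith

lemma le_of_forall_tangent {y z : ℝ} (hy : 0 ≤ y)
    (h : ∀ q : ℚ, 0 < (q : ℝ) → (Real.log q + 1) * y - q ≤ z) :
    y * Real.log y ≤ z := by
  rcases eq_or_lt_of_le hy with h0 | hpos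
  · rw [← h0, zero_mul]
    by_contra hz; push_neg at hz
    obtain ⟨q, hq1, hq2⟩ := exists_rat_btwn (neg_pos.mpr hz)
    have := h q (by exact_mod_cast hq1)
    rw [← h0] at this
    simp only [mul_zero, zero_sub] at this
    linarith
  · have hseq : ∀ n : ℕ, ∃ q : ℚ, max (y - 1 / (n + 1)) 0 < (q : ℝ) ∧ (q : ℝ) < y := by
      intro n
      have : max (y - 1 / (n + 1)) 0 < y := by
        apply max_lt _ hpos
        have : (0:ℝ) < 1 / (n + 1) := by positivity
        linarith
      exact exists_rat_btwn this
    choose q hq1 hq2 using hseq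
    have hqpos : ∀ n, 0 < (q n : ℝ) := fun n => lt_of_le_of_lt (le_max_right _ _) (hq1 n)
    have hq_tendsto : Tendsto (fun n => (q n : ℝ)) atTop (𝓝 y) := by
      have hlow : Tendsto (fun n : ℕ => y - 1 / ((n : ℝ) + 1)) atTop (𝓝 y) := by
        have := tendsto_one_div_add_atTop_nhds_zero_nat (𝕜 := ℝ)
        have h2 := (tendsto_const_nhds (x := y) (f := atTop (α := ℕ))).sub this
        simpa using h2
      refine tendsto_of_tendsto_of_tendsto_of_le_of_le hlow tendsto_const_nhds
        (fun n => le_of_lt (lt_of_le_of_lt (le_max_left _ _) (hq1 n))) (fun n => (hq2 n).le)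
    have hlog : Tendsto (fun n => Real.log (q n)) atTop (𝓝 (Real.log y)) :=
      ((Real.continuousAt_log hpos.ne').tendsto).comp hq_tendsto
    have hcont : Tendsto (fun n => (Real.log (q n) + 1) * y - q n) atTop
        (𝓝 ((Real.log y + 1) * y - y)) :=
      ((hlog.add tendsto_const_nhds).mul tendsto_const_nhds).sub hq_tendsto
    have hle := le_of_tendsto hcont (Eventually.of_forall fun n => h (q n) (hqpos n))
    nlinarith


/-- Conditional Jensen for `x log x`. -/
lemma condexp_xlogx_le {m : MeasurableSpace Ω} (_hm : m ≤ F) {X : Ω → ℝ}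
    (hX_nonneg : 0 ≤ᵐ[μ] X) (hX_int : Integrable X μ)
    (hfX_int : Integrable (fun ω => X ω * Real.log (X ω)) μ) :
    ∀ᵐ ω ∂μ, (μ[X|m]) ω * Real.log ((μ[X|m]) ω)
      ≤ (μ[fun ω => X ω * Real.log (X ω)|m]) ω := by
  by_cases hm : m ≤ F
  swap; · exact absurd _hm hm
  have h3 : ∀ᵐ ω ∂μ, ∀ q : ℚ, 0 < (q : ℝ) →
      (Real.log q + 1) * (μ[X|m]) ω - q ≤ (μ[fun ω => X ω * Real.log (X ω)|m]) ω := by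
    rw [ae_all_iff]
    intro q
    by_cases hq : 0 < (q : ℝ)
    swap; · exact Eventually.of_forall fun ω h => absurd h hq
    have haff_int : Integrable (fun ω => (Real.log q + 1) * X ω - q) μ :=
      (hX_int.const_mul _).sub (integrable_const _)
    have h1 : μ[fun ω => (Real.log q + 1) * X ω - q|m]
        ≤ᵐ[μ] μ[fun ω => X ω * Real.log (X ω)|m] := by
      refine condExp_mono haff_int hfX_int ?_
      filter_upwards [hX_nonneg] with ω hω using tangent_le hω hq
    have hsmul : μ[fun ω => (Real.log q + 1) * X ω|m]
        =ᵐ[μ] fun ω => (Real.log q + 1) * (μ[X|m]) ω := by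
      simpa [Pi.smul_def, smul_eq_mul] using condExp_smul (μ := μ) (m := m) (Real.log q + 1) X
    have hsub := condExp_sub (μ := μ) (m := m) (hX_int.const_mul (Real.log q + 1))
      (integrable_const (q : ℝ))
    have hconst : μ[(fun _ => (q : ℝ) : Ω → ℝ)|m] = fun _ => (q : ℝ) := condExp_const hm _
    filter_upwards [h1, hsmul, hsub] with ω h1ω h2ω h3ω hq'
    have heq : (fun ω => (Real.log (q:ℝ) + 1) * X ω - (q:ℝ))
        = ((fun ω => (Real.log (q:ℝ) + 1) * X ω) - fun _ => (q:ℝ)) := rfl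
    rw [heq] at h1ω
    have : (μ[(fun ω => (Real.log (q:ℝ) + 1) * X ω) - (fun _ => (q:ℝ))|m]) ω
        = (Real.log q + 1) * (μ[X|m]) ω - q := by
      have hc := congrFun hconst ω
      simp only [Pi.sub_apply] at h3ω
      rw [h3ω, h2ω, hc]
    linarith [h1ω, this]
  filter_upwards [h3, condExp_nonneg (μ := μ) (m := m) hX_nonneg] with ω hω hpos
  exact le_of_forall_tangent hpos hω

lemma integrable_xlogx_condexp {m : MeasurableSpace Ω} (hm : m ≤ F) {X : Ω → ℝ}
    (hX_nonneg : 0 ≤ᵐ[μ] X) (hX_int : Integrable X μ)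
    (hfX_int : Integrable (fun ω => X ω * Real.log (X ω)) μ) :
    Integrable (fun ω => (μ[X|m]) ω * Real.log ((μ[X|m]) ω)) μ := by
  have hJ := condexp_xlogx_le (F := F) (μ := μ) (m := m) hm hX_nonneg hX_int hfX_int
  have hnn := condExp_nonneg (μ := μ) (m := m) hX_nonneg
  refine Integrable.mono'
    (g := fun ω => |(μ[fun ω => X ω * Real.log (X ω)|m]) ω| + Real.exp (-1))
    ((integrable_condExp (μ := μ)).abs.add (integrable_const _)) ?_ ?_
  · exact (((stronglyMeasurable_condExp.mono hm).measurable).mul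
      (Real.measurable_log.comp (stronglyMeasurable_condExp.mono hm).measurable)).aestronglyMeasurable
  · filter_upwards [hJ, hnn] with ω h1 h2
    rw [Real.norm_eq_abs]
    refine abs_le.mpr ⟨?_, ?_⟩
    · have := neg_exp_le (x := (μ[X|m]) ω) h2
      have := abs_nonneg ((μ[fun ω => X ω * Real.log (X ω)|m]) ω)
      linarith
    · have := le_abs_self ((μ[fun ω => X ω * Real.log (X ω)|m]) ω)
      have := Real.exp_pos (-1 : ℝ)
      linarith

/-- Integrated Jensen. -/
lemma entropy_condexp_le {m : MeasurableSpace Ω} (hm : m ≤ F) {X : Ω → ℝ}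
    (hX_nonneg : 0 ≤ᵐ[μ] X) (hX_int : Integrable X μ)
    (hfX_int : Integrable (fun ω => X ω * Real.log (X ω)) μ) :
    ∫ ω, (μ[X|m]) ω * Real.log ((μ[X|m]) ω) ∂μ ≤ ∫ ω, X ω * Real.log (X ω) ∂μ := by
  calc ∫ ω, (μ[X|m]) ω * Real.log ((μ[X|m]) ω) ∂μ
      ≤ ∫ ω, (μ[fun ω => X ω * Real.log (X ω)|m]) ω ∂μ :=
        integral_mono_ae (integrable_xlogx_condexp (F := F) (μ := μ) (m := m) hm hX_nonneg hX_int hfX_int)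
          (integrable_condExp (μ := μ)) (condexp_xlogx_le (F := F) (μ := μ) (m := m) hm hX_nonneg hX_int hfX_int)
    _ = ∫ ω, X ω * Real.log (X ω) ∂μ := integral_condExp (μ := μ) hm

/-- Plain Jensen: `f(∫X) ≤ ∫ f∘X`. -/
lemma fc_le_entropy {X : Ω → ℝ} (hX_nonneg : 0 ≤ᵐ[μ] X) (hX_int : Integrable X μ)
    (hfX_int : Integrable (fun ω => X ω * Real.log (X ω)) μ) :
    (∫ ω, X ω ∂μ) * Real.log (∫ ω, X ω ∂μ) ≤ ∫ ω, X ω * Real.log (X ω) ∂μ := by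
  refine le_of_forall_tangent (integral_nonneg_of_ae hX_nonneg) fun q hq => ?_
  have haff_int : Integrable (fun ω => (Real.log q + 1) * X ω - q) μ :=
    (hX_int.const_mul _).sub (integrable_const _)
  have h1 : ∫ ω, ((Real.log q + 1) * X ω - q) ∂μ ≤ ∫ ω, X ω * Real.log (X ω) ∂μ := by
    refine integral_mono_ae haff_int hfX_int ?_
    filter_upwards [hX_nonneg] with ω hω using tangent_le hω hq
  rw [integral_sub (hX_int.const_mul _) (integrable_const _), integral_const_mul,
    integral_const, probReal_univ, one_smul] at h1
  exact h1


lemma ae_eq_const_of_trivial {G : Ω → ℝ} (hG : Measurable G)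
    (h : ∀ a : ℝ, μ {ω | a < G ω} = 0 ∨ μ {ω | a < G ω} = 1) :
    ∃ r : ℝ, G =ᵐ[μ] fun _ => r := by
  have hmeas : ∀ a : ℝ, MeasurableSet {ω | a < G ω} := fun a => hG measurableSet_Ioi
  have hS_ne : ∃ a : ℝ, μ {ω | a < G ω} = 0 := by
    by_contra hc; push_neg at hc
    have h1 : ∀ n : ℕ, μ {ω | (n : ℝ) < G ω} = 1 := fun n => (h n).resolve_left (hc n)
    have h0 : ∀ n : ℕ, μ {ω | G ω ≤ (n : ℝ)} = 0 := by
      intro n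
      have hcomp := measure_compl (hmeas n) (measure_ne_top μ _)
      rw [h1 n, measure_univ] at hcomp
      simp only [tsub_self] at hcomp
      convert hcomp using 2
      ext ω; simp [not_lt]
    have hcover : (Set.univ : Set Ω) = ⋃ n : ℕ, {ω | G ω ≤ (n : ℝ)} := by
      ext ω; simp only [Set.mem_univ, Set.mem_iUnion, Set.mem_setOf_eq, true_iff]
      obtain ⟨n, hn⟩ := exists_nat_ge (G ω); exact ⟨n, hn⟩
    have huniv : μ (Set.univ : Set Ω) = 0 := by
      rw [hcover]; exact measure_iUnion_null h0
    rw [measure_univ] at huniv; exact one_ne_zero huniv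
  have hS_bd : ∃ a : ℝ, μ {ω | a < G ω} = 1 := by
    by_contra hc; push_neg at hc
    have h0 : ∀ n : ℕ, μ {ω | -(n : ℝ) < G ω} = 0 := fun n => (h _).resolve_right (hc _)
    have hcover : (Set.univ : Set Ω) = ⋃ n : ℕ, {ω | -(n : ℝ) < G ω} := by
      ext ω; simp only [Set.mem_univ, Set.mem_iUnion, Set.mem_setOf_eq, true_iff]
      obtain ⟨n, hn⟩ := exists_nat_gt (-G ω); exact ⟨n, by linarith⟩
    have huniv : μ (Set.univ : Set Ω) = 0 := by rw [hcover]; exact measure_iUnion_null h0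
    rw [measure_univ] at huniv; exact one_ne_zero huniv
  obtain ⟨a₁, ha₁⟩ := hS_bd
  set S : Set ℝ := {a : ℝ | μ {ω | a < G ω} = 0} with hS
  have hSne : S.Nonempty := hS_ne
  have hSbdd : BddBelow S := by
    refine ⟨a₁, fun b hb => ?_⟩
    by_contra hba; push_neg at hba
    have hsub : {ω | a₁ < G ω} ⊆ {ω | b < G ω} := fun ω hω => lt_trans hba hω
    have hmono := measure_mono (μ := μ) hsub
    rw [ha₁, hb] at hmono
    simp at hmono
  set r := sInf S with hr
  refine ⟨r, ?_⟩
  have hq_null : ∀ q : ℚ, r < (q : ℝ) → μ {ω | (q : ℝ) < G ω} = 0 := by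
    intro q hq
    obtain ⟨a, haS, haq⟩ := exists_lt_of_csInf_lt hSne hq
    exact measure_mono_null (fun ω hω => lt_trans haq hω) haS
  have h_upper : μ {ω | r < G ω} = 0 := by
    refine measure_mono_null (t := ⋃ q : ℚ, {ω | r < (q:ℝ) ∧ (q:ℝ) < G ω}) ?_ ?_
    · intro ω hω
      obtain ⟨q, hq1, hq2⟩ := exists_rat_btwn (show r < G ω from hω)
      exact Set.mem_iUnion.mpr ⟨q, hq1, hq2⟩
    · refine measure_iUnion_null fun q => ?_
      by_cases hrq : r < (q : ℝ)
      · exact measure_mono_null (fun ω hω => hω.2) (hq_null q hrq)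
      · convert measure_empty (μ := μ) (α := Ω)
        ext ω; simp only [Set.mem_setOf_eq, Set.mem_empty_iff_false, iff_false, not_and]
        exact fun hc => absurd hc hrq
  have hq_null' : ∀ q : ℚ, (q : ℝ) < r → μ {ω | G ω ≤ (q : ℝ)} = 0 := by
    intro q hq
    have hqS : (q : ℝ) ∉ S := fun hmem => absurd (csInf_le hSbdd hmem) (not_le.mpr hq)
    have h1 : μ {ω | (q:ℝ) < G ω} = 1 := (h q).resolve_left hqS
    have hcomp := measure_compl (hmeas q) (measure_ne_top μ _)
    rw [h1, measure_univ] at hcomp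
    simp only [tsub_self] at hcomp
    convert hcomp using 2
    ext ω; simp [not_lt]
  have h_lower : μ {ω | G ω < r} = 0 := by
    refine measure_mono_null (t := ⋃ q : ℚ, {ω | (q:ℝ) < r ∧ G ω ≤ (q:ℝ)}) ?_ ?_
    · intro ω hω
      obtain ⟨q, hq1, hq2⟩ := exists_rat_btwn (show G ω < r from hω)
      exact Set.mem_iUnion.mpr ⟨q, hq2, hq1.le⟩
    · refine measure_iUnion_null fun q => ?_
      by_cases hrq : (q : ℝ) < r
      · exact measure_mono_null (fun ω hω => hω.2) (hq_null' q hrq)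
      · convert measure_empty (μ := μ) (α := Ω)
        ext ω; simp only [Set.mem_setOf_eq, Set.mem_empty_iff_false, iff_false, not_and]
        exact fun hc => absurd hc hrq
  rw [Filter.EventuallyEq, ae_iff]
  refine measure_mono_null (t := {ω | G ω < r} ∪ {ω | r < G ω}) ?_
    (measure_union_null h_lower h_upper)
  intro ω hω
  rcases lt_or_gt_of_ne hω with h1 | h1
  · exact Or.inl h1
  · exact Or.inr h1


set_option synthInstance.maxHeartbeats 1000000 in
set_option maxHeartbeats 1000000 in
lemma condexp_trunc_tendsto
    (H : ℝ → MeasurableSpace Ω) (hHF : ∀ t : ℝ, H t ≤ F)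
    (hH_anti : ∀ s t : ℝ, 0 ≤ s → s ≤ t → H t ≤ H s)
    (hH_tail : ∀ A : Set Ω, (∀ t : ℝ, 0 ≤ t → MeasurableSet[H t] A) → μ A = 0 ∨ μ A = 1)
    {g : Ω → ℝ} (hg_meas : Measurable g) (hg0 : ∀ ω, 0 ≤ g ω)
    {M : ℝ} (hM : 0 ≤ M) (hgM : ∀ ω, g ω ≤ M) :
    Tendsto (fun n : ℕ => eLpNorm ((μ[g|H (n : ℝ)]) - fun _ => ∫ ω, g ω ∂μ) 1 μ)
      atTop (𝓝 0) := by
  haveI : Fact ((1:ℝ≥0∞) ≤ 2) := ⟨by norm_num⟩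
  set m : ℕ → MeasurableSpace Ω := fun n => H (n : ℝ) with hm_def
  have hm : ∀ n, m n ≤ F := fun n => hHF _
  have hmon : ∀ k n : ℕ, k ≤ n → m n ≤ m k := fun k n hkn =>
    hH_anti _ _ (Nat.cast_nonneg _) (Nat.cast_le.mpr hkn)
  have hg_int : Integrable g μ := by
    refine Integrable.mono' (integrable_const M) hg_meas.aestronglyMeasurable ?_
    refine Eventually.of_forall fun ω => ?_
    rw [Real.norm_eq_abs, abs_of_nonneg (hg0 ω)]; exact hgM ω
  set E : ℕ → Ω → ℝ := fun n => μ[g|m n] with hE_def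
  have hE_smeas : ∀ n, StronglyMeasurable (E n) :=
    fun n => stronglyMeasurable_condExp.mono (hm n)
  have hE_meas : ∀ n, AEStronglyMeasurable (E n) μ :=
    fun n => (hE_smeas n).aestronglyMeasurable
  have hE_nonneg : ∀ n, 0 ≤ᵐ[μ] E n := fun n => condExp_nonneg (Eventually.of_forall hg0)
  have hE_le : ∀ n, E n ≤ᵐ[μ] fun _ => M := by
    intro n
    have h := condExp_mono (μ := μ) (m := m n) hg_int (integrable_const M)
      (Eventually.of_forall hgM)
    rwa [condExp_const (hm n)] at h
  have hE_bdd : ∀ n, ∀ᵐ ω ∂μ, ‖E n ω‖ ≤ M := by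
    intro n
    filter_upwards [hE_nonneg n, hE_le n] with ω h1 h2
    rw [Real.norm_eq_abs, abs_of_nonneg h1]; exact h2
  have hE_mem2 : ∀ n, MemLp (E n) 2 μ := fun n =>
    (memLp_top_of_bound (hE_meas n) M (hE_bdd n)).mono_exponent le_top
  have hE_int : ∀ n, Integrable (E n) μ := fun _ => integrable_condExp
  have hmul_int : ∀ n k, Integrable (fun ω => E n ω * E k ω) μ := by
    intro n k
    refine Integrable.mono' (((hE_int k).abs.const_mul M))
      ((hE_smeas n).measurable.mul (hE_smeas k).measurable).aestronglyMeasurable ?_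
    filter_upwards [hE_bdd n] with ω h1
    rw [Real.norm_eq_abs, abs_mul]
    exact mul_le_mul_of_nonneg_right (by rwa [Real.norm_eq_abs] at h1) (abs_nonneg _)
  have htower : ∀ k n : ℕ, k ≤ n → μ[E k|m n] =ᵐ[μ] E n := fun k n hkn =>
    condExp_condExp_of_le (hmon k n hkn) (hm k)
  have key : ∀ k n : ℕ, k ≤ n →
      ∫ ω, E k ω * E n ω ∂μ = ∫ ω, E n ω * E n ω ∂μ := by
    intro k n hkn
    have hpull : μ[fun ω => E n ω * E k ω|m n] =ᵐ[μ] fun ω => E n ω * (μ[E k|m n]) ω := by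
      have h := condExp_mul_of_stronglyMeasurable_left (μ := μ) (m := m n)
        stronglyMeasurable_condExp (hmul_int n k) (hE_int k)
      exact h
    calc ∫ ω, E k ω * E n ω ∂μ = ∫ ω, E n ω * E k ω ∂μ := by
          congr 1; funext ω; ring
      _ = ∫ ω, (μ[fun ω => E n ω * E k ω|m n]) ω ∂μ :=
          (integral_condExp (μ := μ) (hm n)).symm
      _ = ∫ ω, E n ω * E n ω ∂μ := by
          refine integral_congr_ae ?_
          filter_upwards [hpull, htower k n hkn] with ω h1 h2
          rw [h1, h2]
  set a : ℕ → ℝ := fun n => ∫ ω, E n ω * E n ω ∂μ with ha_def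
  have hdiff : ∀ k n : ℕ, k ≤ n →
      ∫ ω, (E k ω - E n ω) * (E k ω - E n ω) ∂μ = a k - a n := by
    intro k n hkn
    have h1 : ∫ ω, (E k ω - E n ω) * (E k ω - E n ω) ∂μ
        = ∫ ω, (E k ω * E k ω - 2 * (E k ω * E n ω) + E n ω * E n ω) ∂μ := by
      congr 1; funext ω; ring
    have i2 : Integrable (fun ω => 2 * (E k ω * E n ω)) μ := (hmul_int k n).const_mul 2
    have i1 : Integrable (fun ω => E k ω * E k ω - 2 * (E k ω * E n ω)) μ :=
      (hmul_int k k).sub i2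
    rw [h1, integral_add i1 (hmul_int n n), integral_sub (hmul_int k k) i2,
      integral_const_mul, key k n hkn]
    ring
  have ha_anti : Antitone a := by
    intro k n hkn
    have h := hdiff k n hkn
    have h2 : 0 ≤ ∫ ω, (E k ω - E n ω) * (E k ω - E n ω) ∂μ :=
      integral_nonneg fun ω => mul_self_nonneg _
    linarith
  have ha_bdd : BddBelow (Set.range a) := by
    refine ⟨0, fun x hx => ?_⟩
    obtain ⟨n, rfl⟩ := hx
    exact integral_nonneg fun ω => mul_self_nonneg _
  have ha_cauchy : CauchySeq a :=
    (tendsto_atTop_ciInf ha_anti ha_bdd).cauchySeq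
  set Y : ℕ → Lp ℝ 2 μ := fun n => (hE_mem2 n).toLp (E n) with hY_def
  have hYsub : ∀ k n : ℕ, ((Y k - Y n : Lp ℝ 2 μ) : Ω → ℝ) =ᵐ[μ] fun ω => E k ω - E n ω := by
    intro k n
    filter_upwards [Lp.coeFn_sub (Y k) (Y n), (hE_mem2 k).coeFn_toLp,
      (hE_mem2 n).coeFn_toLp] with ω h1 h2 h3
    rw [h1, Pi.sub_apply, h2, h3]
  have hnorm : ∀ k n : ℕ, k ≤ n → ‖Y k - Y n‖ ^ 2 = a k - a n := by
    intro k n hkn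
    rw [← hdiff k n hkn]
    have hinner := MeasureTheory.L2.inner_def (𝕜 := ℝ) (Y k - Y n) (Y k - Y n)
    rw [real_inner_self_eq_norm_sq (Y k - Y n)] at hinner
    rw [hinner]
    refine integral_congr_ae ?_
    filter_upwards [hYsub k n] with ω h1
    rw [h1]
    simp [RCLike.inner_apply, sq]
  have hYcauchy : CauchySeq Y := by
    rw [Metric.cauchySeq_iff']
    intro ε hε
    obtain ⟨N, hN⟩ := Metric.cauchySeq_iff'.mp ha_cauchy (ε ^ 2) (by positivity)
    refine ⟨N, fun n hn => ?_⟩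
    have h1 : ‖Y N - Y n‖ ^ 2 = a N - a n := hnorm N n hn
    have h2 : |a n - a N| < ε ^ 2 := by simpa [Real.dist_eq] using hN n hn
    have h3 : dist (Y n) (Y N) = ‖Y N - Y n‖ := by
      rw [dist_eq_norm, norm_sub_rev]
    rw [h3]
    by_contra hc
    push_neg at hc
    have h4 : ε ^ 2 ≤ ‖Y N - Y n‖ ^ 2 := by
      apply pow_le_pow_left₀ hε.le hc
    have h5 : a N - a n ≤ |a n - a N| := by
      rw [abs_sub_comm]; exact le_abs_self _
    linarith
  obtain ⟨Yl, hYl⟩ := cauchySeq_tendsto_of_complete hYcauchy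
  have hYmem : ∀ k n : ℕ, k ≤ n →
      Y n ∈ {f : Lp ℝ 2 μ | AEStronglyMeasurable[m k] f μ} := by
    intro k n hkn
    exact ⟨E n, stronglyMeasurable_condExp.mono (hmon k n hkn), (hE_mem2 n).coeFn_toLp⟩
  have hrep : ∀ k : ℕ, AEStronglyMeasurable[m k] (Yl : Ω → ℝ) μ := by
    intro k
    haveI : Fact (m k ≤ F) := ⟨hm k⟩
    have hclosed := isClosed_aestronglyMeasurable (F := ℝ) (p := 2) (μ := μ) (hm k)
    exact hclosed.mem_of_tendsto hYl (eventually_atTop.mpr ⟨k, fun n hn => hYmem k n hn⟩)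
  choose gs hgs_meas hgs_eq using hrep
  set G : Ω → ℝ := fun ω =>
    (Filter.limsup (fun j => ENNReal.ofReal (gs j ω)) atTop).toReal
      - (Filter.limsup (fun j => ENNReal.ofReal (-gs j ω)) atTop).toReal with hG_def
  have hG_meas : ∀ k : ℕ, Measurable[m k] G := by
    intro k
    have hvm : ∀ j : ℕ, Measurable[m k] (gs (j + k)) :=
      fun j => ((hgs_meas (j + k)).measurable).mono (hmon k (j + k) (Nat.le_add_left _ _)) le_rfl
    have h1 : G = fun ω =>
        (Filter.limsup (fun j => ENNReal.ofReal (gs (j + k) ω)) atTop).toReal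
          - (Filter.limsup (fun j => ENNReal.ofReal (-gs (j + k) ω)) atTop).toReal := by
      funext ω
      rw [hG_def]
      rw [Filter.limsup_nat_add (fun j => ENNReal.ofReal (gs j ω)) k,
        Filter.limsup_nat_add (fun j => ENNReal.ofReal (-gs j ω)) k]
    rw [h1]
    have hp : Measurable[m k] fun ω =>
        Filter.limsup (fun j => ENNReal.ofReal (gs (j + k) ω)) atTop :=
      Measurable.limsup fun j => ENNReal.measurable_ofReal.comp (hvm j)
    have hq : Measurable[m k] fun ω =>
        Filter.limsup (fun j => ENNReal.ofReal (-gs (j + k) ω)) atTop :=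
      Measurable.limsup fun j => ENNReal.measurable_ofReal.comp (hvm j).neg
    exact (ENNReal.measurable_toReal.comp hp).sub (ENNReal.measurable_toReal.comp hq)
  have hG_eq : (Yl : Ω → ℝ) =ᵐ[μ] G := by
    have hall : ∀ᵐ ω ∂μ, ∀ j : ℕ, gs j ω = gs 0 ω := by
      rw [ae_all_iff]
      intro j
      filter_upwards [hgs_eq j, hgs_eq 0] with ω h1 h2
      rw [← h1, ← h2]
    filter_upwards [hall, hgs_eq 0] with ω hω h0
    have hcp : (fun j => ENNReal.ofReal (gs j ω)) = fun _ => ENNReal.ofReal (gs 0 ω) :=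
      funext fun j => by rw [hω j]
    have hcm : (fun j => ENNReal.ofReal (-gs j ω)) = fun _ => ENNReal.ofReal (-gs 0 ω) :=
      funext fun j => by rw [hω j]
    rw [hG_def]
    simp only [hcp, hcm, Filter.limsup_const]
    rw [← h0]
    rcases le_total 0 ((Yl : Ω → ℝ) ω) with hsgn | hsgn
    · rw [ENNReal.toReal_ofReal hsgn, ENNReal.ofReal_of_nonpos (by linarith)]
      simp
    · rw [ENNReal.ofReal_of_nonpos hsgn, ENNReal.toReal_ofReal (by linarith)]
      simp
  have htriv : ∀ a : ℝ, μ {ω | a < G ω} = 0 ∨ μ {ω | a < G ω} = 1 := by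
    intro b
    refine hH_tail _ fun t ht => ?_
    have hle : H (⌈t⌉₊ : ℝ) ≤ H t := hH_anti t _ ht (Nat.le_ceil t)
    have hGt : Measurable[H t] G := ((hG_meas ⌈t⌉₊).mono hle le_rfl)
    exact hGt measurableSet_Ioi
  obtain ⟨r, hGr⟩ := ae_eq_const_of_trivial (F := F) (μ := μ)
    ((hG_meas 0).mono (hm 0) le_rfl) htriv
  have hYlr : (Yl : Ω → ℝ) =ᵐ[μ] fun _ => r := hG_eq.trans hGr
  have hL2 : Tendsto (fun n => eLpNorm (E n - fun _ => r) 2 μ) atTop (𝓝 0) := by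
    have h1 : ∀ n, eLpNorm (E n - fun _ => r) 2 μ = ENNReal.ofReal ‖Y n - Yl‖ := by
      intro n
      have hae : ((Y n - Yl : Lp ℝ 2 μ) : Ω → ℝ) =ᵐ[μ] (E n - fun _ => r) := by
        filter_upwards [Lp.coeFn_sub (Y n) Yl, (hE_mem2 n).coeFn_toLp, hYlr] with ω e1 e2 e3
        rw [e1, Pi.sub_apply, e2, e3, Pi.sub_apply]
      rw [← eLpNorm_congr_ae hae, Lp.norm_def, ENNReal.ofReal_toReal (Lp.eLpNorm_ne_top _)]
    simp_rw [h1]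
    have h3 : Tendsto (fun n => ‖Y n - Yl‖) atTop (𝓝 0) :=
      tendsto_iff_norm_sub_tendsto_zero.mp hYl
    have h4 := ENNReal.tendsto_ofReal h3
    simpa using h4
  have hL1 : Tendsto (fun n => eLpNorm (E n - fun _ => r) 1 μ) atTop (𝓝 0) := by
    refine tendsto_of_tendsto_of_tendsto_of_le_of_le tendsto_const_nhds hL2
      (fun n => zero_le) fun n => ?_
    exact eLpNorm_le_eLpNorm_of_exponent_le (by norm_num)
      ((hE_meas n).sub aestronglyMeasurable_const)
  have hr : r = ∫ ω, g ω ∂μ := by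
    have hTend := tendsto_integral_of_L1' (μ := μ) (fun _ : Ω => r) aestronglyMeasurable_const
      (F := E) (l := atTop) (Eventually.of_forall hE_int) hL1
    have hconstint : ∫ _ : Ω, r ∂μ = r := by simp
    have hEn_int_eq : ∀ n, ∫ ω, E n ω ∂μ = ∫ ω, g ω ∂μ := fun n =>
      integral_condExp (μ := μ) (hm n)
    rw [hconstint] at hTend
    have hTend2 : Tendsto (fun _ : ℕ => ∫ ω, g ω ∂μ) atTop (𝓝 r) := by
      refine hTend.congr fun n => hEn_int_eq n
    exact (tendsto_nhds_unique tendsto_const_nhds hTend2).symm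
  rw [hr] at hL1
  exact hL1


lemma toReal_eLpNorm_one {h : Ω → ℝ} (hh : Integrable h μ) :
    (eLpNorm h 1 μ).toReal = ∫ ω, |h ω| ∂μ := by
  rw [eLpNorm_one_eq_lintegral_enorm, ← ofReal_integral_norm_eq_lintegral_enorm hh,
    ENNReal.toReal_ofReal (integral_nonneg fun ω => norm_nonneg _)]
  simp [Real.norm_eq_abs]

lemma eLpNorm_one_eq_ofReal_integral {h : Ω → ℝ} (hh : Integrable h μ) :
    eLpNorm h 1 μ = ENNReal.ofReal (∫ ω, |h ω| ∂μ) := by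
  rw [eLpNorm_one_eq_lintegral_enorm, ← ofReal_integral_norm_eq_lintegral_enorm hh]
  simp [Real.norm_eq_abs]

lemma unifIntegrable_of_dominated {f G : ℕ → Ω → ℝ}
    (hdom : ∀ k, ∀ᵐ ω ∂μ, |f k ω| ≤ G k ω)
    (hG : UnifIntegrable G 1 μ) : UnifIntegrable f 1 μ := by
  intro ε hε
  obtain ⟨δ, hδ, hbound⟩ := hG hε
  refine ⟨δ, hδ, fun i s hs hμs => ?_⟩
  refine le_trans (eLpNorm_mono_ae ?_) (hbound i s hs hμs)
  filter_upwards [hdom i] with ω hω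
  rw [Real.norm_eq_abs, Real.norm_eq_abs]
  by_cases hmem : ω ∈ s
  · rw [Set.indicator_of_mem hmem, Set.indicator_of_mem hmem]
    exact le_trans hω (le_abs_self _)
  · simp [Set.indicator_of_notMem hmem]

lemma condexp_L1_tendsto
    (H : ℝ → MeasurableSpace Ω) (hHF : ∀ t : ℝ, H t ≤ F)
    (hH_anti : ∀ s t : ℝ, 0 ≤ s → s ≤ t → H t ≤ H s)
    (hH_tail : ∀ A : Set Ω, (∀ t : ℝ, 0 ≤ t → MeasurableSet[H t] A) → μ A = 0 ∨ μ A = 1)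
    {θ : Ω → ℝ} (hθ_meas : Measurable θ) (hθ_nonneg : ∀ ω, 0 ≤ θ ω)
    (hθ_int : Integrable θ μ) :
    Tendsto (fun n : ℕ => eLpNorm ((μ[θ|H (n : ℝ)]) - fun _ => ∫ ω, θ ω ∂μ) 1 μ)
      atTop (𝓝 0) := by
  set c := ∫ ω, θ ω ∂μ with hc
  have hθt_int : ∀ n : ℕ, Integrable (fun ω => (μ[θ|H (n:ℝ)]) ω - c) μ :=
    fun n => integrable_condExp.sub (integrable_const c)
  have key : ∀ ε : ℝ, 0 < ε → ∀ᶠ n : ℕ in atTop,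
      ∫ ω, |(μ[θ|H (n:ℝ)]) ω - c| ∂μ < ε := by
    intro ε hε
    -- truncation
    have htrunc : Tendsto (fun M : ℕ => ∫ ω, (θ ω - min (θ ω) (M:ℝ)) ∂μ) atTop (𝓝 0) := by
      have h0 : Tendsto (fun M : ℕ => ∫ ω, (θ ω - min (θ ω) (M:ℝ)) ∂μ) atTop
          (𝓝 (∫ ω, (0:ℝ) ∂μ)) := by
        refine tendsto_integral_of_dominated_convergence θ
          (fun M => (hθ_meas.sub (hθ_meas.min measurable_const)).aestronglyMeasurable)
          hθ_int (fun M => ?_) ?_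
        · refine Eventually.of_forall fun ω => ?_
          rw [Real.norm_eq_abs, abs_of_nonneg (by simp [min_le_left])]
          have : 0 ≤ min (θ ω) (M:ℝ) := le_min (hθ_nonneg ω) (Nat.cast_nonneg _)
          linarith
        · refine Eventually.of_forall fun ω => ?_
          have hev : ∀ᶠ M : ℕ in atTop, θ ω - min (θ ω) (M:ℝ) = 0 := by
            refine eventually_atTop.mpr ⟨⌈θ ω⌉₊, fun M hM => ?_⟩
            have hle : θ ω ≤ (M:ℝ) := le_trans (Nat.le_ceil _) (Nat.cast_le.mpr hM)
            rw [min_eq_left hle]; ring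
          exact Tendsto.congr' (hev.mono fun M h => h.symm) tendsto_const_nhds
      simpa using h0
    obtain ⟨M, hM⟩ := (htrunc.eventually_lt_const (by linarith : (0:ℝ) < ε/4)).exists
    set g : Ω → ℝ := fun ω => min (θ ω) (M:ℝ) with hg_def
    have hg_meas : Measurable g := hθ_meas.min measurable_const
    have hg0 : ∀ ω, 0 ≤ g ω := fun ω => le_min (hθ_nonneg ω) (Nat.cast_nonneg _)
    have hgM : ∀ ω, g ω ≤ (M:ℝ) := fun ω => min_le_right _ _
    have hg_int : Integrable g μ := by
      refine Integrable.mono' hθ_int hg_meas.aestronglyMeasurable ?_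
      refine Eventually.of_forall fun ω => ?_
      rw [Real.norm_eq_abs, abs_of_nonneg (hg0 ω)]
      exact min_le_left _ _
    have hθg_int : Integrable (fun ω => θ ω - g ω) μ := hθ_int.sub hg_int
    have hθg_nonneg : ∀ ω, 0 ≤ θ ω - g ω := fun ω => by
      have := min_le_left (θ ω) (M:ℝ); simp only [hg_def]; linarith
    have hθg_small : ∫ ω, (θ ω - g ω) ∂μ < ε/4 := hM
    set cM := ∫ ω, g ω ∂μ with hcM
    have h1a := condexp_trunc_tendsto H hHF hH_anti hH_tail hg_meas hg0
      (Nat.cast_nonneg M) hgM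
    have h1a' : Tendsto
        (fun n : ℕ => (eLpNorm ((μ[g|H (n:ℝ)]) - fun _ => cM) 1 μ).toReal) atTop (𝓝 0) := by
      have := (ENNReal.tendsto_toReal (by simp : (0:ℝ≥0∞) ≠ ⊤)).comp h1a
      simpa [Function.comp_def] using this
    have hmid := h1a'.eventually_lt_const (by linarith : (0:ℝ) < ε/4)
    filter_upwards [hmid] with n hn
    -- decompose
    have hsub : μ[fun ω => θ ω - g ω|H (n:ℝ)]
        =ᵐ[μ] μ[θ|H (n:ℝ)] - μ[g|H (n:ℝ)] := condExp_sub hθ_int hg_int _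
    have hptwise : ∀ᵐ ω ∂μ, |(μ[θ|H (n:ℝ)]) ω - c|
        ≤ |(μ[fun ω => θ ω - g ω|H (n:ℝ)]) ω| + (|(μ[g|H (n:ℝ)]) ω - cM| + |cM - c|) := by
      filter_upwards [hsub] with ω hω
      have : (μ[θ|H (n:ℝ)]) ω - c
          = (μ[fun ω => θ ω - g ω|H (n:ℝ)]) ω + (((μ[g|H (n:ℝ)]) ω - cM) + (cM - c)) := by
        simp only [Pi.sub_apply] at hω
        rw [hω]; ring
      rw [this]
      exact le_trans (abs_add_le _ _) (by gcongr; exact abs_add_le _ _)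
    have hint1 : Integrable (fun ω => |(μ[fun ω => θ ω - g ω|H (n:ℝ)]) ω|) μ :=
      integrable_condExp.abs
    have hint2a : Integrable (fun ω => |(μ[g|H (n:ℝ)]) ω - cM|) μ :=
      (integrable_condExp.sub (integrable_const cM)).abs
    have hint2 : Integrable (fun ω => |(μ[g|H (n:ℝ)]) ω - cM| + |cM - c|) μ :=
      hint2a.add (integrable_const _)
    have hstep : ∫ ω, |(μ[θ|H (n:ℝ)]) ω - c| ∂μ
        ≤ (∫ ω, |(μ[fun ω => θ ω - g ω|H (n:ℝ)]) ω| ∂μ)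
          + ((∫ ω, |(μ[g|H (n:ℝ)]) ω - cM| ∂μ) + |cM - c|) := by
      have := integral_mono_ae (f := fun ω => |(μ[θ|H (n:ℝ)]) ω - c|)
        (g := fun ω => |(μ[fun ω => θ ω - g ω|H (n:ℝ)]) ω|
          + (|(μ[g|H (n:ℝ)]) ω - cM| + |cM - c|))
        (hθt_int n).abs (hint1.add hint2) hptwise
      rwa [integral_add hint1 hint2, integral_add hint2a (integrable_const _),
        integral_const, probReal_univ, one_smul] at this
    have hb1 : ∫ ω, |(μ[fun ω => θ ω - g ω|H (n:ℝ)]) ω| ∂μ < ε/4 := by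
      refine lt_of_le_of_lt (integral_abs_condExp_le _) ?_
      have : ∫ ω, |θ ω - g ω| ∂μ = ∫ ω, (θ ω - g ω) ∂μ := by
        congr 1; funext ω; exact abs_of_nonneg (hθg_nonneg ω)
      rw [this]; exact hθg_small
    have hb3 : |cM - c| < ε/4 := by
      have h1 : c - cM = ∫ ω, (θ ω - g ω) ∂μ := by
        rw [hc, hcM]; exact (integral_sub hθ_int hg_int).symm
      rw [abs_sub_comm, h1, abs_of_nonneg (integral_nonneg hθg_nonneg)]
      exact hθg_small
    have hb2 : ∫ ω, |(μ[g|H (n:ℝ)]) ω - cM| ∂μ < ε/4 := by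
      have heq := toReal_eLpNorm_one (μ := μ)
        (h := (μ[g|H (n:ℝ)]) - fun _ => cM)
        (integrable_condExp.sub (integrable_const cM))
      have : ∫ ω, |(μ[g|H (n:ℝ)]) ω - cM| ∂μ
          = (eLpNorm ((μ[g|H (n:ℝ)]) - fun _ => cM) 1 μ).toReal := by
        rw [heq]; rfl
      rw [this]; exact hn
    linarith
  have hJ : Tendsto (fun n : ℕ => ∫ ω, |(μ[θ|H (n:ℝ)]) ω - c| ∂μ) atTop (𝓝 0) := by
    rw [tendsto_order]
    constructor
    · intro b hb
      refine Eventually.of_forall fun n => lt_of_lt_of_le hb ?_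
      exact integral_nonneg fun ω => abs_nonneg _
    · intro b hb
      exact key b hb
  have heq : ∀ n : ℕ, eLpNorm ((μ[θ|H (n:ℝ)]) - fun _ => c) 1 μ
      = ENNReal.ofReal (∫ ω, |(μ[θ|H (n:ℝ)]) ω - c| ∂μ) := by
    intro n
    have := eLpNorm_one_eq_ofReal_integral (μ := μ)
      (h := (μ[θ|H (n:ℝ)]) - fun _ => c) (hθt_int n)
    rw [this]
    rfl
  simp_rw [heq]
  have := ENNReal.tendsto_ofReal hJ
  simpa using this

end BWE

end BWEAux

open BWE Topology
open scoped ENNReal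

/-- Backwards-martingale entropy decrease: if `(𝓗_t)_{t ≥ 0}` is an antitone family of
sub-σ-algebras whose intersection is `μ`-trivial, and `θ ≥ 0` has `θ` and `θ log θ`
integrable, then with `θ_t = E[θ | 𝓗_t]` and `f(x) = x log x`, the function
`t ↦ ∫ f(θ_t) dμ` is nonincreasing on `[0,∞)` and converges to `f(∫ θ dμ)` as `t → ∞`;
in particular it decreases to `0` when `∫ θ dμ = 1`. -/
theorem integral_xlogx_condexp_antitone_tendsto
    {Ω : Type*} [F : MeasurableSpace Ω] (μ : Measure Ω) [IsProbabilityMeasure μ]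
    (θ : Ω → ℝ) (hθ_meas : Measurable θ) (hθ_nonneg : ∀ ω, 0 ≤ θ ω)
    (hθ_int : Integrable θ μ)
    (hθlog_int : Integrable (fun ω => θ ω * Real.log (θ ω)) μ)
    (H : ℝ → MeasurableSpace Ω) (hHF : ∀ t : ℝ, H t ≤ F)
    (hH_anti : ∀ s t : ℝ, 0 ≤ s → s ≤ t → H t ≤ H s)
    (hH_tail_trivial : ∀ A : Set Ω,
      (∀ t : ℝ, 0 ≤ t → MeasurableSet[H t] A) → μ A = 0 ∨ μ A = 1) :
    (∀ s t : ℝ, 0 ≤ s → s ≤ t →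
      (∫ ω, (μ[θ|H t]) ω * Real.log ((μ[θ|H t]) ω) ∂μ)
        ≤ ∫ ω, (μ[θ|H s]) ω * Real.log ((μ[θ|H s]) ω) ∂μ) ∧
    Tendsto (fun t : ℝ => ∫ ω, (μ[θ|H t]) ω * Real.log ((μ[θ|H t]) ω) ∂μ)
      atTop (nhds ((∫ ω, θ ω ∂μ) * Real.log (∫ ω, θ ω ∂μ))) ∧
    ((∫ ω, θ ω ∂μ) = 1 →
      Tendsto (fun t : ℝ => ∫ ω, (μ[θ|H t]) ω * Real.log ((μ[θ|H t]) ω) ∂μ)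
        atTop (nhds 0)) := by
  have hθ_ae : 0 ≤ᵐ[μ] θ := Eventually.of_forall hθ_nonneg
  have hfθt_int : ∀ t : ℝ,
      Integrable (fun ω => (μ[θ|H t]) ω * Real.log ((μ[θ|H t]) ω)) μ := fun t =>
    integrable_xlogx_condexp (F := F) (μ := μ) (m := H t) (hHF t) hθ_ae hθ_int hθlog_int
  have part1 : ∀ s t : ℝ, 0 ≤ s → s ≤ t →
      (∫ ω, (μ[θ|H t]) ω * Real.log ((μ[θ|H t]) ω) ∂μ)
        ≤ ∫ ω, (μ[θ|H s]) ω * Real.log ((μ[θ|H s]) ω) ∂μ := by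
    intro s t hs hst
    have htow : μ[μ[θ|H s]|H t] =ᵐ[μ] μ[θ|H t] :=
      condExp_condExp_of_le (hH_anti s t hs hst) (hHF s)
    have heq : ∫ ω, (μ[θ|H t]) ω * Real.log ((μ[θ|H t]) ω) ∂μ
        = ∫ ω, (μ[μ[θ|H s]|H t]) ω * Real.log ((μ[μ[θ|H s]|H t]) ω) ∂μ := by
      refine integral_congr_ae ?_
      filter_upwards [htow] with ω h
      rw [h]
    rw [heq]
    exact entropy_condexp_le (F := F) (μ := μ) (m := H t) (hHF t)
      (condExp_nonneg hθ_ae) integrable_condExp (hfθt_int s)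
  have hc_nonneg : 0 ≤ ∫ ω, θ ω ∂μ := integral_nonneg hθ_nonneg
  have part2 : Tendsto (fun t : ℝ => ∫ ω, (μ[θ|H t]) ω * Real.log ((μ[θ|H t]) ω) ∂μ)
      atTop (nhds ((∫ ω, θ ω ∂μ) * Real.log (∫ ω, θ ω ∂μ))) := by
    by_cases hc0 : (∫ ω, θ ω ∂μ) = 0
    · -- degenerate case
      have hθ0 : θ =ᵐ[μ] 0 := by
        refine (integral_eq_zero_iff_of_nonneg hθ_nonneg hθ_int).mp hc0
      have hzero : ∀ t : ℝ, ∫ ω, (μ[θ|H t]) ω * Real.log ((μ[θ|H t]) ω) ∂μ = 0 := by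
        intro t
        have h1 : μ[θ|H t] =ᵐ[μ] (0 : Ω → ℝ) := by
          refine (condExp_congr_ae hθ0).trans ?_
          rw [condExp_zero]
        have h2 : (fun ω => (μ[θ|H t]) ω * Real.log ((μ[θ|H t]) ω)) =ᵐ[μ] fun _ => (0:ℝ) := by
          filter_upwards [h1] with ω h
          simp only [Pi.zero_apply] at h
          rw [h]; simp
        rw [integral_congr_ae h2, integral_zero]
      simp_rw [hzero, hc0]
      simpa using tendsto_const_nhds
    · have hcpos : 0 < ∫ ω, θ ω ∂μ := lt_of_le_of_ne hc_nonneg (Ne.symm hc0)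
      set c := ∫ ω, θ ω ∂μ with hc
      have hL1 := condexp_L1_tendsto (F := F) (μ := μ) H hHF hH_anti hH_tail_trivial
        hθ_meas hθ_nonneg hθ_int
      have hmeasconv : TendstoInMeasure μ (fun n : ℕ => μ[θ|H (n:ℝ)]) atTop
          (fun _ => c) := by
        refine tendstoInMeasure_of_tendsto_eLpNorm one_ne_zero
          (fun n => (stronglyMeasurable_condExp.mono (hHF _)).aestronglyMeasurable)
          aestronglyMeasurable_const ?_
        exact hL1
      obtain ⟨ns, hns_mono, hns_ae⟩ := hmeasconv.exists_seq_tendsto_ae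
      set Fk : ℕ → Ω → ℝ := fun k ω =>
        (μ[θ|H (ns k : ℝ)]) ω * Real.log ((μ[θ|H (ns k : ℝ)]) ω) with hFk_def
      have hFk_meas : ∀ k, AEStronglyMeasurable (Fk k) μ := fun k =>
        (((stronglyMeasurable_condExp.mono (hHF _)).measurable).mul
          (Real.measurable_log.comp
            (stronglyMeasurable_condExp.mono (hHF _)).measurable)).aestronglyMeasurable
      have hFk_tendsto : ∀ᵐ ω ∂μ,
          Tendsto (fun k => Fk k ω) atTop (𝓝 (c * Real.log c)) := by
        filter_upwards [hns_ae] with ω hω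
        have hcont : ContinuousAt (fun x : ℝ => x * Real.log x) c :=
          continuousAt_id.mul (Real.continuousAt_log hcpos.ne')
        exact hcont.tendsto.comp hω
      have hFk_inmeasure : TendstoInMeasure μ Fk atTop (fun _ => c * Real.log c) :=
        tendstoInMeasure_of_tendsto_ae hFk_meas hFk_tendsto
      set b : Ω → ℝ := fun ω => |θ ω * Real.log (θ ω)| + Real.exp (-1) with hb_def
      have hb_int : Integrable b μ := hθlog_int.abs.add (integrable_const _)
      have hui0 := hb_int.uniformIntegrable_condExp (ℱ := fun k : ℕ => H (ns k : ℝ))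
        (fun k => hHF _)
      have hdom : ∀ k, ∀ᵐ ω ∂μ, |Fk k ω| ≤ (μ[b|H (ns k : ℝ)]) ω := by
        intro k
        have hJ := condexp_xlogx_le (F := F) (μ := μ) (m := H (ns k : ℝ)) (hHF _)
          hθ_ae hθ_int hθlog_int
        have h1 : μ[fun ω => θ ω * Real.log (θ ω)|H (ns k : ℝ)] ≤ᵐ[μ] μ[b|H (ns k : ℝ)] := by
          refine condExp_mono hθlog_int hb_int (Eventually.of_forall fun ω => ?_)
          have := le_abs_self (θ ω * Real.log (θ ω))
          have := Real.exp_pos (-1 : ℝ)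
          simp only [hb_def]
          linarith
        have h2 : (fun _ : Ω => Real.exp (-1)) ≤ᵐ[μ] μ[b|H (ns k : ℝ)] := by
          have h3 := condExp_mono (μ := μ) (m := H (ns k : ℝ)) (integrable_const (Real.exp (-1)))
            hb_int (Eventually.of_forall fun ω => by
              simp only [hb_def]
              have := abs_nonneg (θ ω * Real.log (θ ω))
              linarith)
          rwa [condExp_const (hHF _)] at h3
        have h3 := condExp_nonneg (μ := μ) (m := H (ns k : ℝ)) hθ_ae
        filter_upwards [hJ, h1, h2, h3] with ω a1 a2 a3 a4
        refine abs_le.mpr ⟨?_, le_trans a1 a2⟩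
        · show -((μ[b|H (ns k : ℝ)]) ω) ≤ Fk k ω
          simp only [hFk_def]
          have h5 := neg_exp_le a4
          linarith
      have hui : UnifIntegrable Fk 1 μ :=
        unifIntegrable_of_dominated (F := F) (μ := μ) hdom hui0.2.1
      have hVitali := tendsto_Lp_finite_of_tendstoInMeasure (μ := μ) le_rfl
        (by simp : (1:ℝ≥0∞) ≠ ∞) hFk_meas (memLp_const (c * Real.log c)) hui hFk_inmeasure
      have hint_tendsto : Tendsto (fun k => ∫ ω, Fk k ω ∂μ) atTop
          (𝓝 (c * Real.log c)) := by
        have h := tendsto_integral_of_L1' (μ := μ) (fun _ : Ω => c * Real.log c)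
          aestronglyMeasurable_const (Eventually.of_forall fun k => hfθt_int (ns k : ℝ)) hVitali
        simpa using h
      -- monotone + subsequence limit
      have hlb : ∀ t : ℝ, c * Real.log c
          ≤ ∫ ω, (μ[θ|H t]) ω * Real.log ((μ[θ|H t]) ω) ∂μ := by
        intro t
        have h1 := fc_le_entropy (F := F) (μ := μ) (X := μ[θ|H t])
          (condExp_nonneg hθ_ae) integrable_condExp (hfθt_int t)
        rwa [integral_condExp (μ := μ) (hHF t)] at h1
      rw [tendsto_order]
      constructor
      · intro x hx
        exact Eventually.of_forall fun t => lt_of_lt_of_le hx (hlb t)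
      · intro x hx
        obtain ⟨k, hk⟩ := (hint_tendsto.eventually_lt_const hx).exists
        filter_upwards [eventually_ge_atTop ((ns k : ℝ))] with t ht
        exact lt_of_le_of_lt (part1 (ns k : ℝ) t (Nat.cast_nonneg _) ht) hk
  refine ⟨part1, part2, fun h1 => ?_⟩
  rw [h1] at part2
  simpa using part2

end
end
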